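/- arXiv:2008.11480 — 10 statements merged into one kernel-verified Lean document; each statement's English description precedes it below -/
import Mathlib

section
/- Let A and S be real symmetric positive definite n×n matrices such that 2S − A is also positive definite. Then the spectral radius of the matrix I − S⁻¹A is strictly less than 1 (equivalently, every complex eigenvalue of I − S⁻¹A has modulus less than 1). -/
open Matrix Complex
open scoped ComplexOrder

lemma aux_posDef_map {n : ℕ} {M : Matrix (Fin n) (Fin n) ℝ} (hM : M.PosDef) :
    (M.map (algebraMap ℝ ℂ)).PosDef := by
  rw [posDef_iff_dotProduct_mulVec]
  constructor
  · exact hM.1.map _ (fun a => by simp [Complex.conj_ofReal])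
  · intro x hx
    set xr : Fin n → ℝ := fun i => (x i).re with hxr
    set xi : Fin n → ℝ := fun i => (x i).im with hxi
    set z : ℂ := star x ⬝ᵥ ((M.map (algebraMap ℝ ℂ)) *ᵥ x) with hz
    have hherm : (M.map (algebraMap ℝ ℂ)).IsHermitian :=
      hM.1.map _ (fun a => by simp [Complex.conj_ofReal])
    have hself : star x ⬝ᵥ ((M.map (algebraMap ℝ ℂ)) *ᵥ x)
        = star (star x ⬝ᵥ ((M.map (algebraMap ℝ ℂ)) *ᵥ x)) := by
      nth_rewrite 1 [star_dotProduct]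
      rw [star_mulVec, hherm.eq, ← dotProduct_mulVec]
    have him : z.im = 0 := by
      have := congrArg Complex.im hself
      simp only [RCLike.star_def, Complex.conj_im] at this
      rw [hz] at *
      linarith
    have hzsum : z = ∑ j, ∑ k, (starRingEnd ℂ) (x j) * ((M j k : ℂ) * x k) := by
      simp [hz, dotProduct, mulVec, Matrix.map_apply, Finset.mul_sum]
    have hre : z.re = xr ⬝ᵥ M *ᵥ xr + xi ⬝ᵥ M *ᵥ xi := by
      rw [hzsum]
      rw [Complex.re_sum]
      simp only [Complex.re_sum, Complex.mul_re, Complex.conj_re, Complex.conj_im,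
        Complex.ofReal_re, Complex.ofReal_im, Complex.mul_im]
      simp only [dotProduct, mulVec, Finset.mul_sum, ← Finset.sum_add_distrib]
      apply Finset.sum_congr rfl; intro j _
      apply Finset.sum_congr rfl; intro k _
      ring
    have hne : xr ≠ 0 ∨ xi ≠ 0 := by
      by_contra h
      push_neg at h
      apply hx
      funext i
      have h1 := congrFun h.1 i
      have h2 := congrFun h.2 i
      exact Complex.ext h1 h2
    have hpos : 0 < z.re := by
      rcases hne with h | h
      · have h1 : 0 < star xr ⬝ᵥ M *ᵥ xr := hM.dotProduct_mulVec_pos h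
        have h2 : 0 ≤ star xi ⬝ᵥ M *ᵥ xi := hM.posSemidef.dotProduct_mulVec_nonneg xi
        rw [star_trivial] at h1 h2
        rw [hre]; linarith
      · have h1 : 0 ≤ star xr ⬝ᵥ M *ᵥ xr := hM.posSemidef.dotProduct_mulVec_nonneg xr
        have h2 : 0 < star xi ⬝ᵥ M *ᵥ xi := hM.dotProduct_mulVec_pos h
        rw [star_trivial] at h1 h2
        rw [hre]; linarith
    exact Complex.lt_def.mpr ⟨by simpa using hpos, by simp [him]⟩

/-- If `A` and `S` are real symmetric positive definite matrices such that `2S - A`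
is also positive definite, then every complex eigenvalue of `I - S⁻¹A` has modulus
less than one, i.e. the spectral radius of `I - S⁻¹A` is strictly less than `1`. -/
theorem stmt_0 {m : ℕ} (A S : Matrix (Fin m) (Fin m) ℝ)
    (hA : A.PosDef) (hS : S.PosDef) (h2SA : (2 • S - A).PosDef) :
    ∀ μ : ℂ, μ ∈ spectrum ℂ (((1 : Matrix (Fin m) (Fin m) ℝ) - S⁻¹ * A).map
      (algebraMap ℝ ℂ)) → ‖μ‖ < 1 := by
  intro μ hμ
  set f := algebraMap ℝ ℂ
  rw [← AlgEquiv.spectrum_eq (Matrix.toLinAlgEquiv' (R := ℂ) (n := Fin m)),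
    ← Module.End.hasEigenvalue_iff_mem_spectrum] at hμ
  obtain ⟨v, hv⟩ := hμ.exists_hasEigenvector
  have hv0 : v ≠ 0 := hv.2
  have hvec : ((1 - S⁻¹ * A).map f) *ᵥ v = μ • v := by
    have := hv.apply_eq_smul
    rwa [Matrix.toLinAlgEquiv'_apply] at this
  set Ac := A.map f with hAc
  set Sc := S.map f with hSc
  have hSdet : IsUnit S.det := isUnit_iff_ne_zero.mpr hS.det_pos.ne'
  have hmap : ((1 : Matrix (Fin m) (Fin m) ℝ) - S⁻¹ * A).map f
      = 1 - (S⁻¹).map f * Ac := by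
    rw [show ((1 : Matrix (Fin m) (Fin m) ℝ) - S⁻¹ * A).map f
      = f.mapMatrix (1 - S⁻¹ * A) from rfl, map_sub, _root_.map_one, _root_.map_mul]
    rfl
  have hB : ((S⁻¹).map f * Ac) *ᵥ v = (1 - μ) • v := by
    rw [hmap] at hvec
    rw [sub_mulVec, one_mulVec] at hvec
    have : ((S⁻¹).map f * Ac) *ᵥ v = v - μ • v := by
      rw [← hvec]; ring_nf
    rw [this, sub_smul, one_smul]
  have hSmul : Sc * ((S⁻¹).map f * Ac) = Ac := by
    rw [← mul_assoc]
    have : Sc * (S⁻¹).map f = 1 := by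
      rw [hSc, ← Matrix.map_mul, Matrix.mul_nonsing_inv S hSdet,
        show ((1 : Matrix (Fin m) (Fin m) ℝ)).map ⇑f = f.mapMatrix 1 from rfl,
        _root_.map_one]
    rw [this, one_mul]
  have hAv : Ac *ᵥ v = (1 - μ) • (Sc *ᵥ v) := by
    rw [← hSmul, ← Matrix.mulVec_mulVec, hB, Matrix.mulVec_smul]
  have ha : (0:ℂ) < star v ⬝ᵥ Ac *ᵥ v := (aux_posDef_map hA).dotProduct_mulVec_pos hv0
  have hs : (0:ℂ) < star v ⬝ᵥ Sc *ᵥ v := (aux_posDef_map hS).dotProduct_mulVec_pos hv0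
  have h2 : (0:ℂ) < star v ⬝ᵥ ((2 • S - A).map f) *ᵥ v := (aux_posDef_map h2SA).dotProduct_mulVec_pos hv0
  set a : ℂ := star v ⬝ᵥ Ac *ᵥ v with haa
  set s : ℂ := star v ⬝ᵥ Sc *ᵥ v with hss
  have has : a = (1 - μ) * s := by
    rw [haa, hAv, dotProduct_smul, smul_eq_mul, hss]
  have h2map : (2 • S - A).map f = Sc + Sc - Ac := by
    rw [show (2 • S - A).map f = f.mapMatrix (2 • S - A) from rfl, map_sub,
      two_smul, map_add]
    rfl
  have h2' : (0:ℂ) < s + s - a := by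
    rw [haa, hss, ← dotProduct_add, ← dotProduct_sub, ← add_mulVec, ← sub_mulVec, ← h2map]
    exact h2
  obtain ⟨har, hai⟩ := Complex.lt_def.mp ha
  obtain ⟨hsr, hsi⟩ := Complex.lt_def.mp hs
  obtain ⟨h2r, _⟩ := Complex.lt_def.mp h2'
  simp only [Complex.zero_re, Complex.zero_im] at har hsr h2r hai hsi
  have hseq : s = ((s.re : ℝ) : ℂ) := Complex.ext rfl (by simp [← hsi])
  have haeq : a = ((a.re : ℝ) : ℂ) := Complex.ext rfl (by simp [← hai])
  have hs0 : s ≠ 0 := fun h => by simp [h] at hsr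
  have hμeq : μ = ((1 - a.re / s.re : ℝ) : ℂ) := by
    have h1 : (1 : ℂ) - μ = a / s := by
      rw [eq_div_iff hs0, has]
    rw [haeq, hseq] at h1
    have hs0' : ((s.re : ℝ) : ℂ) ≠ 0 := hseq ▸ hs0
    push_cast
    field_simp at h1 ⊢
    linear_combination -h1
  have h2re : a.re < 2 * s.re := by
    have : (s + s - a).re = s.re + s.re - a.re := by simp
    rw [this] at h2r
    linarith
  rw [hμeq, Complex.norm_real]
  have hd1 : 0 < a.re / s.re := div_pos har hsr
  have hd2 : a.re / s.re < 2 := (div_lt_iff₀ hsr).mpr (by linarith)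
  rw [Real.norm_eq_abs, abs_lt]
  constructor <;> linarith
end

section
/- Let S, D be n×n matrices over a ring with S invertible and A = S − D. Fix integers h ≥ 1 and n ≥ 2. Initialize G₀ = (Σ_{j=0}^{h−1} (S⁻¹D)^j) S⁻¹ and iterate the Newton–Schulz recursion F_{k−1} = I − G_{k−1}A, G_k = (Σ_{j=0}^{n−1} F_{k−1}^j) G_{k−1}. Then for every k ≥ 0, the inversion error equals F_k = I − G_k A = (S⁻¹D)^{h n^k}. -/
open Finset in
/-- Error model of the Newton–Schulz iteration of order `n` initialized by the
order-`h` power series expansion for the splitting `A = S - D`: for all `k`,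
`F_k = I - G_k A = (S⁻¹D)^(h·nᵏ)`. -/
theorem stmt_4 {m : ℕ} {R : Type*} [CommRing R] (S D : Matrix (Fin m) (Fin m) R)
    (hS : IsUnit S.det) (A : Matrix (Fin m) (Fin m) R) (hA : A = S - D)
    (h n : ℕ) (hh : 1 ≤ h) (hn : 2 ≤ n)
    (G : ℕ → Matrix (Fin m) (Fin m) R)
    (hG0 : G 0 = (∑ j ∈ range h, (S⁻¹ * D) ^ j) * S⁻¹)
    (hG : ∀ k : ℕ, G (k + 1) = (∑ j ∈ range n, (1 - G k * A) ^ j) * G k) :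
    ∀ k : ℕ, (1 : Matrix (Fin m) (Fin m) R) - G k * A = (S⁻¹ * D) ^ (h * n ^ k) := by
  intro k
  induction k with
  | zero =>
    have hSA : S⁻¹ * A = 1 - S⁻¹ * D := by
      rw [hA, Matrix.mul_sub, Matrix.nonsing_inv_mul S hS]
    have hg : (∑ j ∈ range h, (S⁻¹ * D) ^ j) * (1 - S⁻¹ * D)
        = 1 - (S⁻¹ * D) ^ h := by
      rw [← neg_sub (S⁻¹ * D) 1, mul_neg, geom_sum_mul, neg_sub]
    rw [hG0, mul_assoc, hSA, hg, sub_sub_cancel, pow_zero, mul_one]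
  | succ k ih =>
    have key : (1 : Matrix (Fin m) (Fin m) R) - G (k + 1) * A
        = (1 - G k * A) ^ n := by
      have hg : (∑ j ∈ range n, (1 - G k * A) ^ j) * (1 - (1 - G k * A))
          = 1 - (1 - G k * A) ^ n := by
        rw [← neg_sub (1 - G k * A) 1, mul_neg, geom_sum_mul, neg_sub]
      rw [sub_sub_cancel] at hg
      rw [hG k, mul_assoc, hg, sub_sub_cancel]
    rw [key, ih, ← pow_mul, pow_succ, mul_assoc]
end

section
/- Let A, X be n×n matrices over a ring, set Y = I − XA, and for integers p ≥ 0, w ≥ 1 define U = (Σ_{d=0}^{p} Y^d) X and Z = (Σ_{j=0}^{w−1} Y^{(p+1)j}) U. Then (i) I − UA = Y^{p+1}, and (ii) Z = (Σ_{j=0}^{h−1} Y^j) X where h = w(p+1); consequently I − ZA = Y^{h}. -/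
open Finset in
private lemma geom_one_sub {R : Type*} [Ring R] (Y : R) (n : ℕ) :
    (∑ d ∈ range n, Y ^ d) * (1 - Y) = 1 - Y ^ n := by
  have h := geom_sum_mul Y n
  calc (∑ d ∈ range n, Y ^ d) * (1 - Y)
      = -((∑ d ∈ range n, Y ^ d) * (Y - 1)) := by rw [← mul_neg, neg_sub]
    _ = 1 - Y ^ n := by rw [h, neg_sub]

open Finset in
private lemma geom_prod {R : Type*} [Ring R] (Y : R) (p w : ℕ) :
    (∑ j ∈ range w, Y ^ ((p + 1) * j)) * (∑ d ∈ range (p + 1), Y ^ d)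
      = ∑ j ∈ range (w * (p + 1)), Y ^ j := by
  induction w with
  | zero => simp
  | succ w ih =>
      rw [sum_range_succ, add_mul, ih]
      have : (w + 1) * (p + 1) = w * (p + 1) + (p + 1) := by ring
      conv_rhs => rw [this, sum_range_add]
      rw [mul_sum]
      congr 1
      refine Finset.sum_congr rfl fun i _ => ?_
      rw [← pow_add, mul_comm (p+1) w]

open Finset in
/-- Unified factorization of the order-`h` Newton–Schulz update with `h = w(p+1)`:
with `Y = I - XA`, `U = (∑_{d≤p} Y^d) X` and `Z = (∑_{j<w} Y^((p+1)j)) U`, one has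
`I - UA = Y^(p+1)`, `Z = (∑_{j<h} Yʲ) X` and `I - ZA = Y^h`. -/
theorem stmt_6 {m : ℕ} {R : Type*} [Ring R] (A X : Matrix (Fin m) (Fin m) R)
    (Y : Matrix (Fin m) (Fin m) R) (hY : Y = 1 - X * A)
    (p w : ℕ) (hw : 1 ≤ w)
    (U Z : Matrix (Fin m) (Fin m) R)
    (hU : U = (∑ d ∈ range (p + 1), Y ^ d) * X)
    (hZ : Z = (∑ j ∈ range w, Y ^ ((p + 1) * j)) * U) :
    (1 : Matrix (Fin m) (Fin m) R) - U * A = Y ^ (p + 1) ∧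
      Z = (∑ j ∈ range (w * (p + 1)), Y ^ j) * X ∧
      (1 : Matrix (Fin m) (Fin m) R) - Z * A = Y ^ (w * (p + 1)) := by
  have hXA : X * A = 1 - Y := by rw [hY, sub_sub_cancel]
  have h1 : (1 : Matrix (Fin m) (Fin m) R) - U * A = Y ^ (p + 1) := by
    rw [hU, mul_assoc, hXA, geom_one_sub, sub_sub_cancel]
  have h2 : Z = (∑ j ∈ range (w * (p + 1)), Y ^ j) * X := by
    rw [hZ, hU, ← mul_assoc, geom_prod]
  refine ⟨h1, h2, ?_⟩
  rw [h2, mul_assoc, hXA, geom_one_sub, sub_sub_cancel]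
end

section
/- Let A, X be n×n matrices over a ring and set Y = I − XA. Then the following nested factorization of the order-45 Newton–Schulz update holds: { I + (I + (Y⁹)²)(Y⁹ + (Y⁹)²) } · (I + Y³ + Y⁶) · (3I + (XA)(−3I + XA)) · X = (Σ_{j=0}^{44} Y^j) X. Moreover Y³ = I − (Σ_{d=0}^{2} Y^d) X A and Y⁹ = I − (Σ_{d=0}^{8} Y^d) X A. -/
open Finset in
/-- Nested factorization of the order-45 Newton–Schulz update requiring only 10
matrix-by-matrix multiplications: with `Y = I - XA`,
`{I + (I + (Y⁹)²)(Y⁹ + (Y⁹)²)} (I + Y³ + Y⁶) (3I + (XA)(−3I + XA)) X = (∑_{j<45} Yʲ) X`,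
and moreover `Y³ = I − (∑_{d<3} Y^d) X A` and `Y⁹ = I − (∑_{d<9} Y^d) X A`. -/
theorem stmt_8 {m : ℕ} {R : Type*} [Ring R] (A X : Matrix (Fin m) (Fin m) R)
    (Y : Matrix (Fin m) (Fin m) R) (hY : Y = 1 - X * A) :
    (1 + (1 + (Y ^ 9) ^ 2) * (Y ^ 9 + (Y ^ 9) ^ 2)) *
        ((1 + Y ^ 3 + Y ^ 6) *
          (((3 : Matrix (Fin m) (Fin m) R) + (X * A) * (-(3 : Matrix (Fin m) (Fin m) R) + X * A)) * X)) =
      (∑ j ∈ range 45, Y ^ j) * X ∧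
    Y ^ 3 = 1 - (∑ d ∈ range 3, Y ^ d) * X * A ∧
    Y ^ 9 = 1 - (∑ d ∈ range 9, Y ^ d) * X * A := by
  have hXA : X * A = 1 - Y := by rw [hY]; noncomm_ring
  refine ⟨?_, ?_, ?_⟩ <;>
    simp only [Finset.sum_range_succ, Finset.sum_range_zero, Matrix.mul_assoc, hXA] <;>
    noncomm_ring
end

section
/- Let A be an n×n matrix over a ring, let T_c and Γ_c be n×n matrices with T_c A = I − Γ_c, and let G_{k−1} be an n×n matrix with F_{k−1} = I − G_{k−1}A. Define, for an integer n ≥ 1, the composite Newton–Schulz update G_k = T_c + Γ_c (Σ_{j=0}^{n−1} F_{k−1}^j) G_{k−1}. Then the new inversion error satisfies F_k = I − G_k A = Γ_c F_{k−1}^n. -/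
open Finset in
/-- Error model of the composite Newton–Schulz update: if `T_c A = I - Γ_c` and
`F_{k-1} = I - G_{k-1} A`, then `G_k = T_c + Γ_c (∑_{j<n} F_{k-1}ʲ) G_{k-1}`
has inversion error `F_k = I - G_k A = Γ_c F_{k-1}ⁿ`. -/
theorem stmt_11 {m : ℕ} {R : Type*} [Ring R] (A : Matrix (Fin m) (Fin m) R)
    (Tc Γc : Matrix (Fin m) (Fin m) R) (hTc : Tc * A = 1 - Γc)
    (Gprev Fprev : Matrix (Fin m) (Fin m) R) (hF : Fprev = 1 - Gprev * A)
    (n : ℕ) (hn : 1 ≤ n)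
    (Gk : Matrix (Fin m) (Fin m) R)
    (hGk : Gk = Tc + Γc * ((∑ j ∈ range n, Fprev ^ j) * Gprev)) :
    (1 : Matrix (Fin m) (Fin m) R) - Gk * A = Γc * Fprev ^ n := by
  have hGA : Gprev * A = 1 - Fprev := by rw [hF]; noncomm_ring
  have hgs : (∑ j ∈ range n, Fprev ^ j) * (1 - Fprev) = 1 - Fprev ^ n := by
    have := geom_sum_mul Fprev n
    have h2 : (∑ j ∈ range n, Fprev ^ j) * (1 - Fprev) =
        -((∑ j ∈ range n, Fprev ^ j) * (Fprev - 1)) := by noncomm_ring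
    rw [h2, this]; noncomm_ring
  subst hGk
  rw [add_mul, hTc, mul_assoc, mul_assoc, hGA, hgs]
  noncomm_ring
end

section
/- Let A be an n×n matrix over a ring and let n ≥ 1 be an integer. Suppose the matrices L_{k−1}, G_{k−1} are given, set Γ_k = I − L_{k−1}A and F_{k−1} = I − G_{k−1}A, and define L_k = (Σ_{j=0}^{n−1} Γ_k^j) L_{k−1} and G_k = L_k + Γ_k^n (Σ_{j=0}^{n−1} F_{k−1}^j) G_{k−1}. Then (i) Γ_k^n = I − L_k A, and (ii) the inversion error satisfies F_k = I − G_k A = Γ_k^n F_{k−1}^n. -/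
open Finset in
/-- One step of the double Newton–Schulz algorithm: with `Γ_k = I - L_{k-1}A`,
`F_{k-1} = I - G_{k-1}A`, `L_k = (∑_{j<n} Γ_kʲ) L_{k-1}` and
`G_k = L_k + Γ_kⁿ (∑_{j<n} F_{k-1}ʲ) G_{k-1}`, one has `Γ_kⁿ = I - L_k A` and
`F_k = I - G_k A = Γ_kⁿ F_{k-1}ⁿ`. -/
theorem stmt_13 {m : ℕ} {R : Type*} [Ring R] (A : Matrix (Fin m) (Fin m) R)
    (n : ℕ) (hn : 1 ≤ n)
    (Lprev Gprev : Matrix (Fin m) (Fin m) R)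
    (Γk Fprev : Matrix (Fin m) (Fin m) R)
    (hΓk : Γk = 1 - Lprev * A) (hFprev : Fprev = 1 - Gprev * A)
    (Lk Gk : Matrix (Fin m) (Fin m) R)
    (hLk : Lk = (∑ j ∈ range n, Γk ^ j) * Lprev)
    (hGk : Gk = Lk + Γk ^ n * ((∑ j ∈ range n, Fprev ^ j) * Gprev)) :
    Γk ^ n = 1 - Lk * A ∧
      (1 : Matrix (Fin m) (Fin m) R) - Gk * A = Γk ^ n * Fprev ^ n := by
  have hLA : Lprev * A = 1 - Γk := by rw [hΓk, sub_sub_cancel]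
  have hGA : Gprev * A = 1 - Fprev := by rw [hFprev, sub_sub_cancel]
  have h1 : Lk * A = 1 - Γk ^ n := by
    rw [hLk, mul_assoc, hLA]
    calc (∑ j ∈ range n, Γk ^ j) * (1 - Γk)
        = -((∑ j ∈ range n, Γk ^ j) * (Γk - 1)) := by noncomm_ring
      _ = -(Γk ^ n - 1) := by rw [geom_sum_mul]
      _ = 1 - Γk ^ n := by noncomm_ring
  have h2 : (∑ j ∈ range n, Fprev ^ j) * (Gprev * A) = 1 - Fprev ^ n := by
    rw [hGA]
    calc (∑ j ∈ range n, Fprev ^ j) * (1 - Fprev)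
        = -((∑ j ∈ range n, Fprev ^ j) * (Fprev - 1)) := by noncomm_ring
      _ = -(Fprev ^ n - 1) := by rw [geom_sum_mul]
      _ = 1 - Fprev ^ n := by noncomm_ring
  refine ⟨by rw [h1, sub_sub_cancel], ?_⟩
  rw [hGk, add_mul, h1, mul_assoc, mul_assoc, h2]
  noncomm_ring
end

section
/- Let S, D be n×n matrices over a ring with S invertible, A = S − D, and write M = S⁻¹D. Fix integers h ≥ 1 and n ≥ 2. Initialize T₀ = G₀ = (Σ_{j=0}^{h−1} M^j) S⁻¹, Γ₀ = I − T₀A, L₀ = (Σ_{j=0}^{n−1} Γ₀^j) T₀, and iterate for k ≥ 1: Γ_k = I − L_{k−1}A, L_k = (Σ_{j=0}^{n−1} Γ_k^j) L_{k−1}, G_k = L_k + Γ_k^n (Σ_{j=0}^{n−1} F_{k−1}^j) G_{k−1}, where F_{k−1} = I − G_{k−1}A. Then for all k ≥ 0: Γ_k = M^{h n^k} and F_k = I − G_k A = M^{h (k n^{k+1} + n^k)}. -/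
open Finset in
/-- Explicit transient error model of the double Newton–Schulz algorithm with
splitting `A = S - D`, `M = S⁻¹D`, initial expansion order `h` and iteration
order `n`: for all `k`, `Γ_k = M^(h nᵏ)` and
`F_k = I - G_k A = M^(h (k n^(k+1) + nᵏ))`. -/
theorem stmt_14 {m : ℕ} {R : Type*} [CommRing R] (S D : Matrix (Fin m) (Fin m) R)
    (hS : IsUnit S.det) (A M : Matrix (Fin m) (Fin m) R)
    (hA : A = S - D) (hM : M = S⁻¹ * D)
    (h n : ℕ) (hh : 1 ≤ h) (hn : 2 ≤ n)
    (G L Γ : ℕ → Matrix (Fin m) (Fin m) R)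
    (hG0 : G 0 = (∑ j ∈ range h, M ^ j) * S⁻¹)
    (hΓ0 : Γ 0 = 1 - G 0 * A)
    (hL0 : L 0 = (∑ j ∈ range n, (Γ 0) ^ j) * G 0)
    (hΓ : ∀ k : ℕ, Γ (k + 1) = 1 - L k * A)
    (hL : ∀ k : ℕ, L (k + 1) = (∑ j ∈ range n, (Γ (k + 1)) ^ j) * L k)
    (hG : ∀ k : ℕ, G (k + 1) =
      L (k + 1) + (Γ (k + 1)) ^ n * ((∑ j ∈ range n, (1 - G k * A) ^ j) * G k)) :
    ∀ k : ℕ, Γ k = M ^ (h * n ^ k) ∧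
      (1 : Matrix (Fin m) (Fin m) R) - G k * A = M ^ (h * (k * n ^ (k + 1) + n ^ k)) := by
  have geom : ∀ (Y : Matrix (Fin m) (Fin m) R) (p : ℕ),
      (∑ j ∈ range p, Y ^ j) * (1 - Y) = 1 - Y ^ p := by
    intro Y p
    rw [← neg_sub Y 1, mul_neg, geom_sum_mul, neg_sub]
  have hSinvA : S⁻¹ * A = 1 - M := by
    rw [hA, hM, mul_sub, Matrix.nonsing_inv_mul S hS]
  have hG0A : G 0 * A = 1 - M ^ h := by
    rw [hG0, mul_assoc, hSinvA, geom]
  have hΓ0M : Γ 0 = M ^ h := by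
    rw [hΓ0, hG0A, sub_sub_cancel]
  have key : ∀ k : ℕ, Γ k = M ^ (h * n ^ k) ∧
      (1 : Matrix (Fin m) (Fin m) R) - L k * A = M ^ (h * n ^ (k + 1)) ∧
      (1 : Matrix (Fin m) (Fin m) R) - G k * A = M ^ (h * (k * n ^ (k + 1) + n ^ k)) := by
    intro k
    induction k with
    | zero =>
      refine ⟨by simpa using hΓ0M, ?_, by simpa using hΓ0M ▸ hΓ0.symm⟩
      have : L 0 * A = 1 - (Γ 0) ^ n := by
        rw [hL0, mul_assoc, show G 0 * A = 1 - Γ 0 from by rw [hΓ0]; noncomm_ring, geom]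
      rw [this, sub_sub_cancel, hΓ0M, ← pow_mul]
      ring_nf
    | succ k ih =>
      obtain ⟨hΓk, hLk, hFk⟩ := ih
      have hΓk1 : Γ (k + 1) = M ^ (h * n ^ (k + 1)) := by rw [hΓ k, hLk]
      have hLkA : L k * A = 1 - Γ (k + 1) := by rw [hΓ k]; noncomm_ring
      have hL1A : L (k + 1) * A = 1 - (Γ (k + 1)) ^ n := by
        rw [hL k, mul_assoc, hLkA, geom]
      have hLk1 : (1 : Matrix (Fin m) (Fin m) R) - L (k + 1) * A = M ^ (h * n ^ (k + 2)) := by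
        rw [hL1A, sub_sub_cancel, hΓk1, ← pow_mul]
        ring_nf
      refine ⟨hΓk1, hLk1, ?_⟩
      have hGkA : G k * A = 1 - M ^ (h * (k * n ^ (k + 1) + n ^ k)) := by
        rw [← hFk]; noncomm_ring
      have expand : (1 : Matrix (Fin m) (Fin m) R) - G (k + 1) * A =
          (Γ (k + 1)) ^ n * (M ^ (h * (k * n ^ (k + 1) + n ^ k))) ^ n := by
        rw [hG k, add_mul, mul_assoc ((Γ (k+1))^n), mul_assoc, hFk, hGkA, geom, hL1A]
        noncomm_ring
      rw [expand, hΓk1, ← pow_mul, ← pow_mul, ← pow_add]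
      congr 1
      ring
  intro k
  exact ⟨(key k).1, (key k).2.2⟩
end

section
/- Let A be an n×n matrix over a ring, let p ≥ 2 be an integer, and define the iteration Z_k = (Σ_{j=0}^{p−1} (I − Z_{k−1}A)^j) Z_{k−1} and G_k = G_{k−1} + (I − G_{k−1}A) Z_k for given initial matrices Z₀, G₀. Then, with L_k = I − Z_k A and F_k = I − G_k A, the errors satisfy L_k = L_{k−1}^p and F_k = F_{k−1} L_{k−1}^p for all k ≥ 1. -/
open Finset in
/-- Error model of the algorithm of Srivastava et al. with two Newton–Schulz
loops: with `Z_k = (∑_{j<p} (I - Z_{k-1}A)ʲ) Z_{k-1}` and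
`G_k = G_{k-1} + (I - G_{k-1}A) Z_k`, the errors `L_k = I - Z_k A` and
`F_k = I - G_k A` satisfy `L_k = L_{k-1}^p` and `F_k = F_{k-1} L_{k-1}^p`. -/
theorem stmt_15 {m : ℕ} {R : Type*} [Ring R] (A : Matrix (Fin m) (Fin m) R)
    (p : ℕ) (hp : 2 ≤ p)
    (Z G : ℕ → Matrix (Fin m) (Fin m) R)
    (hZ : ∀ k : ℕ, Z (k + 1) = (∑ j ∈ range p, (1 - Z k * A) ^ j) * Z k)
    (hG : ∀ k : ℕ, G (k + 1) = G k + (1 - G k * A) * Z (k + 1)) :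
    ∀ k : ℕ, (1 : Matrix (Fin m) (Fin m) R) - Z (k + 1) * A = (1 - Z k * A) ^ p ∧
      (1 : Matrix (Fin m) (Fin m) R) - G (k + 1) * A =
        (1 - G k * A) * (1 - Z k * A) ^ p := by
  intro k
  set L := (1 : Matrix (Fin m) (Fin m) R) - Z k * A with hLdef
  have hZA : Z k * A = 1 - L := by rw [hLdef]; noncomm_ring
  have key : (∑ j ∈ range p, L ^ j) * (Z k * A) = 1 - L ^ p := by
    rw [hZA]
    have h := geom_sum_mul L p
    calc (∑ j ∈ range p, L ^ j) * (1 - L) = -((∑ j ∈ range p, L ^ j) * (L - 1)) := by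
          noncomm_ring
      _ = -(L ^ p - 1) := by rw [h]
      _ = 1 - L ^ p := by noncomm_ring
  have hL : (1 : Matrix (Fin m) (Fin m) R) - Z (k + 1) * A = L ^ p := by
    rw [hZ k, mul_assoc, key]; noncomm_ring
  refine ⟨hL, ?_⟩
  rw [hG k, add_mul, mul_assoc]
  have : Z (k + 1) * A = 1 - L ^ p := by
    have := hL; linear_combination (norm := noncomm_ring) -this
  rw [this]; noncomm_ring
end

section
/- Let A be an n×n matrix over a ring, b and θ* vectors with Aθ* = b, and let L_k, G_k, Γ_k, F_k be n×n matrices satisfying Γ_k^n = I − L_k A and F_k = I − G_k A for integers n ≥ 1, q ≥ 1. Define the Richardson update θ_k = θ_{k−1} − [ L_k + Γ_k^n (Σ_{j=0}^{q−1} F_k^j) G_k ] (Aθ_{k−1} − b). Then the parameter estimation error θ̃_k = θ_k − θ* satisfies θ̃_k = Γ_k^n F_k^q θ̃_{k−1}. -/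
open Finset in
/-- Error model of the Richardson iteration with high-order convergence
accelerator: if `Aθ* = b`, `Γ_kⁿ = I - L_k A`, `F_k = I - G_k A`, and
`θ_k = θ_{k-1} - [L_k + Γ_kⁿ (∑_{j<q} F_kʲ) G_k](Aθ_{k-1} - b)`, then the
parameter error `θ̃_k = θ_k - θ*` satisfies `θ̃_k = Γ_kⁿ F_k^q θ̃_{k-1}`. -/
theorem stmt_16 {m : ℕ} {R : Type*} [CommRing R] (A : Matrix (Fin m) (Fin m) R)
    (b θstar : Fin m → R) (hsol : A.mulVec θstar = b)
    (n q : ℕ) (hn : 1 ≤ n) (hq : 1 ≤ q)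
    (Lk Gk Γk Fk : Matrix (Fin m) (Fin m) R)
    (hL : Γk ^ n = 1 - Lk * A) (hF : Fk = 1 - Gk * A)
    (θprev θk : Fin m → R)
    (hθ : θk = θprev -
      (Lk + Γk ^ n * ((∑ j ∈ range q, Fk ^ j) * Gk)).mulVec (A.mulVec θprev - b)) :
    θk - θstar = (Γk ^ n * Fk ^ q).mulVec (θprev - θstar) := by
  have hmat : Γk ^ n * Fk ^ q
      = 1 - (Lk + Γk ^ n * ((∑ j ∈ range q, Fk ^ j) * Gk)) * A := by
    have hgeom : (∑ j ∈ range q, Fk ^ j) * (1 - Fk) = 1 - Fk ^ q := by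
      have h := geom_sum_mul Fk q
      have : (∑ j ∈ range q, Fk ^ j) * (1 - Fk)
          = -((∑ j ∈ range q, Fk ^ j) * (Fk - 1)) := by noncomm_ring
      rw [this, h]; noncomm_ring
    have hGA : Gk * A = 1 - Fk := by rw [hF]; noncomm_ring
    rw [add_mul, mul_assoc ((Γk : Matrix (Fin m) (Fin m) R) ^ n),
      mul_assoc (∑ j ∈ range q, Fk ^ j), hGA, hgeom]
    have hLA : Lk * A = 1 - Γk ^ n := by rw [hL]; noncomm_ring
    rw [hLA]; noncomm_ring
  have hAv : A.mulVec θprev - b = A.mulVec (θprev - θstar) := by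
    rw [Matrix.mulVec_sub, hsol]
  rw [hθ, hAv, hmat, Matrix.sub_mulVec, Matrix.one_mulVec, ← Matrix.mulVec_mulVec]
  abel
end

section
/- Let A be an n×n matrix over a ring and n ≥ 1 an integer. Suppose L_{k−1}, G_{k−1}, Γ_{k−1}, F_{k−1} are n×n matrices, Γ_k = Γ_{k−1}^n satisfies Γ_k = I − L_{k−1}A, L_k = (Σ_{j=0}^{n−1} Γ_k^j) L_{k−1}, and ω_{k−1} = L_{k−1} + Γ_{k−1}^n (Σ_{j=0}^{n−1} F_{k−1}^j) G_{k−1}. Then (Σ_{j=0}^{n−1} Γ_k^j) [ ω_{k−1} − (Σ_{j=0}^{n−1} F_{k−1}^j) G_{k−1} ] + (Σ_{j=0}^{n−1} F_{k−1}^j) G_{k−1} = L_k + Γ_k^n (Σ_{j=0}^{n−1} F_{k−1}^j) G_{k−1}; that is, the estimate G_k = L_k + Γ_k^n (Σ_{j=0}^{n−1} F_{k−1}^j) G_{k−1} can be computed recursively from ω_{k−1} with a single additional matrix-by-matrix multiplication. -/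
open Finset in
/-- Computationally efficient recursion for the gain matrix of the Richardson
iteration: with `Γ_k = Γ_{k-1}ⁿ = I - L_{k-1}A`, `L_k = (∑_{j<n} Γ_kʲ) L_{k-1}`
and `ω_{k-1} = L_{k-1} + Γ_{k-1}ⁿ (∑_{j<n} F_{k-1}ʲ) G_{k-1}`, one has
`(∑_{j<n} Γ_kʲ)[ω_{k-1} − (∑_{j<n} F_{k-1}ʲ) G_{k-1}] + (∑_{j<n} F_{k-1}ʲ) G_{k-1}
 = L_k + Γ_kⁿ (∑_{j<n} F_{k-1}ʲ) G_{k-1}`. -/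
theorem stmt_19 {m : ℕ} {R : Type*} [Ring R] (A : Matrix (Fin m) (Fin m) R)
    (n : ℕ) (hn : 1 ≤ n)
    (Lprev Gprev Γprev Fprev : Matrix (Fin m) (Fin m) R)
    (Γk : Matrix (Fin m) (Fin m) R) (hΓk : Γk = Γprev ^ n)
    (hΓkL : Γk = 1 - Lprev * A)
    (Lk ω : Matrix (Fin m) (Fin m) R)
    (hLk : Lk = (∑ j ∈ range n, Γk ^ j) * Lprev)
    (hω : ω = Lprev + Γprev ^ n * ((∑ j ∈ range n, Fprev ^ j) * Gprev)) :
    (∑ j ∈ range n, Γk ^ j) * (ω - (∑ j ∈ range n, Fprev ^ j) * Gprev) +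
        (∑ j ∈ range n, Fprev ^ j) * Gprev =
      Lk + Γk ^ n * ((∑ j ∈ range n, Fprev ^ j) * Gprev) := by
  subst hΓk hω hLk
  set S := (∑ j ∈ range n, Fprev ^ j) * Gprev with hS
  have h : (∑ j ∈ range n, (Γprev ^ n) ^ j) * ((Γprev ^ n) * S - S)
      = ((Γprev ^ n) ^ n) * S - S := by
    rw [← sub_one_mul, ← mul_assoc, geom_sum_mul, sub_mul, one_mul]
  calc (∑ j ∈ range n, (Γprev ^ n) ^ j) *
        (Lprev + Γprev ^ n * S - S) + S
      = (∑ j ∈ range n, (Γprev ^ n) ^ j) * Lprev +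
        ((∑ j ∈ range n, (Γprev ^ n) ^ j) * (Γprev ^ n * S - S) + S) := by
        rw [add_sub_assoc, mul_add]
        abel
    _ = (∑ j ∈ range n, (Γprev ^ n) ^ j) * Lprev + (Γprev ^ n) ^ n * S := by
        rw [h]; abel
end
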